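/- Let m ≥ 1 and let b : ℝ → ℝ be m times continuously differentiable with b^{(m)} locally in L^u for some u > 1. Then there exists C > 0 such that for all x ≠ y, |R_m(b; x, y)| ≤ C |x − y|^m ( |I(x,y)|⁻¹ ∫_{I(x,y)} |b^{(m)}(z)|^u dz )^{1/u}, where R_m(b; x, y) = b(x) − Σ_{γ < m} b^{(γ)}(y)(x − y)^γ/γ! is the m-th order Taylor remainder and I(x,y) = (x − 5|x−y|, x + 5|x−y|). -/

import Mathlib

open MeasureTheory Set Real

/-- Cohen's lemma: for `b` of class `C^m` with `b^{(m)}` locally in `L^u` (`u > 1`), the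
`m`-th Taylor remainder satisfies
`|R_m(b;x,y)| ≤ C |x - y|^m (|I(x,y)|⁻¹ ∫_{I(x,y)} |b^{(m)}|^u)^{1/u}`,
where `I(x,y) = (x - 5|x-y|, x + 5|x-y|)`. -/
theorem stmt11 (m : ℕ) (hm : 1 ≤ m) (u : ℝ) (hu : 1 < u) (b : ℝ → ℝ)
    (hb : ContDiff ℝ m b)
    (hloc : ∀ a c : ℝ, a < c →
      MeasureTheory.IntegrableOn (fun z => |iteratedDeriv m b z| ^ u) (Set.Ioo a c)) :
    ∃ C : ℝ, 0 < C ∧ ∀ x y : ℝ, x ≠ y →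
      |b x - ∑ γ ∈ Finset.range m, iteratedDeriv γ b y * (x - y) ^ γ / (γ.factorial : ℝ)|
        ≤ C * |x - y| ^ m *
          ((10 * |x - y|)⁻¹ *
            ∫ z in Set.Ioo (x - 5 * |x - y|) (x + 5 * |x - y|),
              |iteratedDeriv m b z| ^ u) ^ (1 / u) := by
  obtain ⟨n, rfl⟩ : ∃ n, m = n + 1 := ⟨m - 1, (Nat.succ_pred_eq_of_pos hm).symm⟩
  set f : ℝ → ℝ := iteratedDeriv (n + 1) b with hf_def
  have hf_cont : Continuous f := hb.continuous_iteratedDeriv (n + 1) le_rfl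
  have hu0 : 0 < u := lt_trans one_pos hu
  refine ⟨10 / (n.factorial : ℝ), by positivity, fun x y hxy => ?_⟩
  set d : ℝ := |x - y| with hd_def
  have hd : 0 < d := abs_pos.mpr (sub_ne_zero.mpr hxy)
  -- Step 1: integral form of the remainder
  have hderiv : ∀ t : ℝ, HasDerivAt (fun t => taylorWithinEval b n univ t x)
      (((n.factorial : ℝ)⁻¹ * (x - t) ^ n) * f t) t := by
    intro t
    have hdiff : DifferentiableWithinAt ℝ (iteratedDerivWithin n b univ) univ t := by
      rw [iteratedDerivWithin_univ]
      exact (hb.differentiable_iteratedDeriv n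
        (by exact_mod_cast Nat.lt_succ_self n) t).differentiableWithinAt
    have := hasDerivWithinAt_taylorWithinEval (f := b) (x := x) (y := t) (n := n)
      uniqueDiffOn_univ Filter.univ_mem (mem_univ t) (subset_refl _)
      ((hb.of_le (m := n) (by exact_mod_cast Nat.le_succ n)).contDiffOn) hdiff
    rw [hasDerivWithinAt_univ] at this
    simpa [iteratedDerivWithin_univ, smul_eq_mul, hf_def] using this
  have hint : IntervalIntegrable (fun t => ((n.factorial : ℝ)⁻¹ * (x - t) ^ n) * f t)
      volume y x := by
    exact (Continuous.mul (by continuity) hf_cont).intervalIntegrable y x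
  have hftc : ∫ t in y..x, ((n.factorial : ℝ)⁻¹ * (x - t) ^ n) * f t =
      b x - ∑ γ ∈ Finset.range (n + 1),
        iteratedDeriv γ b y * (x - y) ^ γ / (γ.factorial : ℝ) := by
    rw [intervalIntegral.integral_eq_sub_of_hasDerivAt (fun t _ => hderiv t) hint]
    congr 1
    · exact taylorWithinEval_self b n univ x
    · rw [taylor_within_apply]
      refine Finset.sum_congr rfl fun k _ => ?_
      rw [iteratedDerivWithin_univ, smul_eq_mul]
      ring
  -- Step 2: bound by the integral of |f| on uIoc
  have habs : |b x - ∑ γ ∈ Finset.range (n + 1),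
      iteratedDeriv γ b y * (x - y) ^ γ / (γ.factorial : ℝ)|
      ≤ (n.factorial : ℝ)⁻¹ * d ^ n * ∫ t in uIoc y x, |f t| := by
    rw [← hftc]
    calc |∫ t in y..x, ((n.factorial : ℝ)⁻¹ * (x - t) ^ n) * f t|
        ≤ ∫ t in uIoc y x, (n.factorial : ℝ)⁻¹ * |x - t| ^ n * |f t| := by
          simpa [abs_mul, abs_pow, mul_assoc, abs_inv, Nat.abs_cast] using
            intervalIntegral.norm_integral_le_integral_norm_uIoc
            (f := fun t => ((n.factorial : ℝ)⁻¹ * (x - t) ^ n) * f t) (a := y) (b := x)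
            (μ := volume)
      _ ≤ ∫ t in uIoc y x, ((n.factorial : ℝ)⁻¹ * d ^ n) * |f t| := by
          refine setIntegral_mono_on ?_ ?_ measurableSet_uIoc ?_
          · exact Continuous.integrableOn_uIoc (by continuity)
          · exact (hf_cont.abs.integrableOn_uIoc).const_mul _
          · intro t ht
            have hxy1 : x - y ≤ d := hd_def ▸ le_abs_self _
            have hxy2 : y - x ≤ d := by
              rw [hd_def, abs_sub_comm]; exact le_abs_self _
            have h1 : |x - t| ≤ d := by
              rcases mem_uIoc.mp ht with ⟨h2, h3⟩ | ⟨h2, h3⟩ <;>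
                rw [abs_sub_le_iff] <;> constructor <;> linarith
            have h2 : |x - t| ^ n ≤ d ^ n := by gcongr
            have h3 : |x - t| ^ n * |f t| ≤ d ^ n * |f t| :=
              mul_le_mul_of_nonneg_right h2 (abs_nonneg _)
            have h4 : (0:ℝ) ≤ (n.factorial : ℝ)⁻¹ := by positivity
            calc (n.factorial : ℝ)⁻¹ * |x - t| ^ n * |f t|
                = (n.factorial : ℝ)⁻¹ * (|x - t| ^ n * |f t|) := by ring
              _ ≤ (n.factorial : ℝ)⁻¹ * (d ^ n * |f t|) :=
                  mul_le_mul_of_nonneg_left h3 h4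
              _ = (n.factorial : ℝ)⁻¹ * d ^ n * |f t| := by ring
      _ = (n.factorial : ℝ)⁻¹ * d ^ n * ∫ t in uIoc y x, |f t| := by
          rw [integral_const_mul]
  -- Step 3: Hoelder's inequality on J = uIoc y x
  set J : Set ℝ := uIoc y x with hJ_def
  have hJmeas : MeasurableSet J := measurableSet_uIoc
  have hJvol : volume J = ENNReal.ofReal d := by
    rw [hJ_def, uIoc, Real.volume_Ioc, max_sub_min_eq_abs, hd_def, abs_sub_comm]
  haveI : IsFiniteMeasure (volume.restrict J) := by
    constructor
    rw [Measure.restrict_apply_univ, hJvol]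
    exact ENNReal.ofReal_lt_top
  set q : ℝ := Real.conjExponent u with hq_def
  have hpq : u.HolderConjugate q := Real.HolderConjugate.conjExponent hu
  obtain ⟨M, hM⟩ := (isCompact_uIcc (a := y) (b := x)).exists_bound_of_continuousOn
      hf_cont.abs.continuousOn
  have hmem : MemLp (fun t => |f t|) (ENNReal.ofReal u) (volume.restrict J) := by
    refine MemLp.of_bound hf_cont.abs.aestronglyMeasurable M ?_
    exact ae_restrict_of_forall_mem hJmeas fun t ht => hM t (uIoc_subset_uIcc ht)
  have hmem1 : MemLp (fun _ : ℝ => (1:ℝ)) (ENNReal.ofReal q) (volume.restrict J) :=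
    memLp_const 1
  have hone : (∫ t in J, (1:ℝ) ^ q ∂volume) = d := by
    simp [Real.one_rpow, measureReal_def, hJvol, ENNReal.toReal_ofReal hd.le]
  have hholder : (∫ t in J, |f t| ∂volume)
      ≤ (∫ t in J, |f t| ^ u ∂volume) ^ (1/u) * d ^ (1/q) := by
    have := integral_mul_le_Lp_mul_Lq_of_nonneg hpq (μ := volume.restrict J)
      (f := fun t => |f t|) (g := fun _ => (1:ℝ))
      (ae_of_all _ fun t => abs_nonneg (f t)) (ae_of_all _ fun _ => zero_le_one) hmem hmem1
    have hdt : (volume J).toReal = d := by rw [hJvol, ENNReal.toReal_ofReal hd.le]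
    simp only [one_div]
    simpa [measureReal_def, hdt] using this
  -- Step 4: enlarge the integration domain
  have hlohi : x - 5 * d < x + 5 * d := by linarith
  have hsub : J ⊆ Ioo (x - 5 * d) (x + 5 * d) := by
    intro t ht
    have hxy1 : x - y ≤ d := hd_def ▸ le_abs_self _
    have hxy2 : y - x ≤ d := by rw [hd_def, abs_sub_comm]; exact le_abs_self _
    have h1 : |x - t| ≤ d := by
      rcases mem_uIoc.mp ht with ⟨h2, h3⟩ | ⟨h2, h3⟩ <;>
        rw [abs_sub_le_iff] <;> constructor <;> linarith
    rw [abs_sub_le_iff] at h1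
    exact ⟨by linarith [h1.1, h1.2], by linarith [h1.1, h1.2]⟩
  set A : ℝ := ∫ z in Ioo (x - 5 * d) (x + 5 * d), |f z| ^ u with hA_def
  have hA0 : 0 ≤ A :=
    setIntegral_nonneg measurableSet_Ioo fun t _ => Real.rpow_nonneg (abs_nonneg _) u
  have hB0 : 0 ≤ ∫ t in J, |f t| ^ u ∂volume :=
    setIntegral_nonneg hJmeas fun t _ => Real.rpow_nonneg (abs_nonneg _) u
  have hmono : (∫ t in J, |f t| ^ u ∂volume) ≤ A :=
    setIntegral_mono_set (hloc _ _ hlohi)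
      (ae_of_all _ fun t => Real.rpow_nonneg (abs_nonneg _) u)
      (HasSubset.Subset.eventuallyLE hsub)
  have hrpow : (∫ t in J, |f t| ^ u ∂volume) ^ (1/u) ≤ A ^ (1/u) :=
    Real.rpow_le_rpow hB0 hmono (by positivity)
  -- Step 5: arithmetic
  set T : ℝ := ((10 * d)⁻¹ * A) ^ (1/u) with hT_def
  have hT0 : 0 ≤ T := Real.rpow_nonneg (by positivity) _
  have hAT : A ^ (1/u) = (10 * d) ^ (1/u) * T := by
    rw [hT_def, ← Real.mul_rpow (by positivity) (by positivity)]
    congr 1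
    field_simp
  have hprod : (10 * d) ^ (1/u) * d ^ (1/q) = 10 ^ (1/u) * d := by
    rw [Real.mul_rpow (by norm_num) hd.le, mul_assoc, ← Real.rpow_add hd,
      one_div, one_div, hpq.inv_add_inv_eq_one, Real.rpow_one]
  have h10 : (10:ℝ) ^ (1/u) ≤ 10 := by
    calc (10:ℝ) ^ (1/u) ≤ (10:ℝ) ^ (1:ℝ) := by
          apply Real.rpow_le_rpow_of_exponent_le (by norm_num)
          rw [div_le_one hu0]
          linarith
      _ = 10 := Real.rpow_one 10
  calc |b x - ∑ γ ∈ Finset.range (n + 1),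
        iteratedDeriv γ b y * (x - y) ^ γ / (γ.factorial : ℝ)|
      ≤ (n.factorial : ℝ)⁻¹ * d ^ n * ∫ t in J, |f t| ∂volume := habs
    _ ≤ (n.factorial : ℝ)⁻¹ * d ^ n * (A ^ (1/u) * d ^ (1/q)) := by
        have h5 : (∫ t in J, |f t| ∂volume) ≤ A ^ (1/u) * d ^ (1/q) :=
          hholder.trans (mul_le_mul_of_nonneg_right hrpow (Real.rpow_nonneg hd.le _))
        exact mul_le_mul_of_nonneg_left h5 (by positivity)
    _ = (n.factorial : ℝ)⁻¹ * (10:ℝ) ^ (1/u) * d ^ (n + 1) * T := by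
        rw [hAT]
        rw [show (10 * d) ^ (1/u) * T * d ^ (1/q) = ((10 * d) ^ (1/u) * d ^ (1/q)) * T by ring,
          hprod, pow_succ]
        ring
    _ ≤ 10 / (n.factorial : ℝ) * d ^ (n + 1) * T := by
        have hdn : (0:ℝ) ≤ d ^ (n + 1) := by positivity
        have : (n.factorial : ℝ)⁻¹ * (10:ℝ) ^ (1/u) ≤ 10 / (n.factorial : ℝ) :=
          calc (n.factorial : ℝ)⁻¹ * (10:ℝ) ^ (1/u)
              ≤ (n.factorial : ℝ)⁻¹ * 10 := mul_le_mul_of_nonneg_left h10 (by positivity)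
            _ = 10 / (n.factorial : ℝ) := by ring
        exact mul_le_mul_of_nonneg_right (mul_le_mul_of_nonneg_right this hdn) hT0
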